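/- Let B be a blocked plan for an s^m experiment with b blocks of size k over F, let V be a vector subspace of F^m, and let a, b ∈ F^m be nonzero. If span{a} + V^⊥ ≠ span{b} + V^⊥ (as subspaces of F^m), i.e. the effects E_a and E_b lie in different effect classes relative to V, then E_a and E_b are orthogonal through the block factor in the expansion V(B): k·Ñ^{ab} = L̃^a·(L̃^b)ᵀ. -/

import Mathlib

open Matrix

/-- The `E_a`-versus-`E_c` incidence matrix of a blocked plan:
entry `(α, β)` counts the runs at level `α` of `E_a` and level `β` of `E_c`. -/
def incNN {m k : ℕ} {F : Type*} [Field F] [Fintype F] [DecidableEq F]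
    {J : Type*} [Fintype J] (B : J → Fin k → (Fin m → F)) (a c : Fin m → F) :
    Matrix F F ℕ := fun α β =>
  (Finset.univ.filter (fun ju : J × Fin k =>
    (∑ i, a i * B ju.1 ju.2 i) = α ∧ (∑ i, c i * B ju.1 ju.2 i) = β)).card

/-- The `E_a`-versus-block incidence matrix of a blocked plan:
entry `(α, j)` counts the runs of block `j` at level `α` of `E_a`. -/
def incBlk {m k : ℕ} {F : Type*} [Field F] [Fintype F] [DecidableEq F]
    {J : Type*} [Fintype J] (B : J → Fin k → (Fin m → F)) (a : Fin m → F) :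
    Matrix F J ℕ := fun α j =>
  (Finset.univ.filter (fun u : Fin k => (∑ i, a i * B j u i) = α)).card

/-- The replication vector of the effect `E_a`: `r^a_α` counts the runs
of the whole plan at level `α` of `E_a`. -/
def replV {m k : ℕ} {F : Type*} [Field F] [Fintype F] [DecidableEq F]
    {J : Type*} [Fintype J] (B : J → Fin k → (Fin m → F)) (a : Fin m → F) :
    F → ℕ := fun α =>
  (Finset.univ.filter (fun ju : J × Fin k => (∑ i, a i * B ju.1 ju.2 i) = α)).card

/-- The expansion `V(B)` of a blocked plan `B` along a subspace `V`: its blocks are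
indexed by pairs `(j, v)`, and block `(j, v)` consists of the runs `v + B j u`. -/
def expandPlan {m k : ℕ} {F : Type*} [Field F] {J : Type*}
    (B : J → Fin k → (Fin m → F)) (V : Submodule F (Fin m → F)) :
    (J × V) → Fin k → (Fin m → F) :=
  fun jv u => (jv.2 : Fin m → F) + B jv.1 u

/-- The orthocomplement `V^⊥ = {w : w·v = 0 for all v ∈ V}` of a subspace `V` of `F^m`
with respect to the dot product `w·v = Σ_i w_i v_i`. -/
def dotPerp {m : ℕ} {F : Type*} [Field F] (V : Submodule F (Fin m → F)) :
    Submodule F (Fin m → F) where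
  carrier := {w | ∀ v ∈ V, ∑ i, w i * v i = 0}
  zero_mem' := by intro v hv; simp
  add_mem' := by
    intro x y hx hy v hv
    simp only [Set.mem_setOf_eq] at hx hy
    simp only [Pi.add_apply, add_mul, Finset.sum_add_distrib, hx v hv, hy v hv, add_zero]
  smul_mem' := by
    intro c x hx v hv
    simp only [Set.mem_setOf_eq] at hx
    simp only [Pi.smul_apply, smul_eq_mul, mul_assoc, ← Finset.mul_sum, hx v hv, mul_zero]

section Aux

variable {m : ℕ} {F : Type*} [Field F]

lemma dotAdd (a x y : Fin m → F) :
    ∑ i, a i * (x + y) i = (∑ i, a i * x i) + ∑ i, a i * y i := by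
  simp [mul_add, Finset.sum_add_distrib]

lemma dotSmul (a x : Fin m → F) (s : F) :
    ∑ i, a i * (s • x) i = s * ∑ i, a i * x i := by
  simp [Finset.mul_sum, mul_left_comm]

lemma dotSub (a x y : Fin m → F) :
    ∑ i, a i * (x - y) i = (∑ i, a i * x i) - ∑ i, a i * y i := by
  simp [mul_sub, Finset.sum_sub_distrib]

lemma dotAddL (x y v : Fin m → F) :
    ∑ i, (x + y) i * v i = (∑ i, x i * v i) + ∑ i, y i * v i := by
  simp [add_mul, Finset.sum_add_distrib]

lemma dotSmulL (x v : Fin m → F) (s : F) :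
    ∑ i, (s • x) i * v i = s * ∑ i, x i * v i := by
  simp [Finset.mul_sum, mul_assoc]

lemma dotSubL (x y v : Fin m → F) :
    ∑ i, (x - y) i * v i = (∑ i, x i * v i) - ∑ i, y i * v i := by
  simp [sub_mul, Finset.sum_sub_distrib]

lemma mem_dotPerp {V : Submodule F (Fin m → F)} {w : Fin m → F} :
    w ∈ dotPerp V ↔ ∀ v ∈ V, ∑ i, w i * v i = 0 := Iff.rfl

lemma mem_span_sup_dotPerp_iff (V : Submodule F (Fin m → F)) (a c : Fin m → F) :
    a ∈ Submodule.span F {c} ⊔ dotPerp V ↔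
      ∃ l : F, ∀ v ∈ V, ∑ i, a i * v i = l * ∑ i, c i * v i := by
  constructor
  · intro h
    rw [Submodule.mem_sup] at h
    obtain ⟨y, hy, z, hz, hyz⟩ := h
    rw [Submodule.mem_span_singleton] at hy
    obtain ⟨l, rfl⟩ := hy
    refine ⟨l, fun v hv => ?_⟩
    rw [← hyz, dotAddL, dotSmulL, mem_dotPerp.mp hz v hv, add_zero]
  · rintro ⟨l, hl⟩
    rw [Submodule.mem_sup]
    refine ⟨l • c, Submodule.mem_span_singleton.mpr ⟨l, rfl⟩, a - l • c,
      mem_dotPerp.mpr fun v hv => ?_, by abel⟩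
    rw [dotSubL, dotSmulL, hl v hv, sub_self]

lemma exists_unit_w (V : Submodule F (Fin m → F)) (a c : Fin m → F)
    (h : ¬ ∃ l : F, ∀ v ∈ V, ∑ i, a i * v i = l * ∑ i, c i * v i) :
    ∃ w ∈ V, (∑ i, a i * w i) = 1 ∧ (∑ i, c i * w i) = 0 := by
  by_cases hk : ∃ u ∈ V, (∑ i, c i * u i) = 0 ∧ (∑ i, a i * u i) ≠ 0
  · obtain ⟨u, hu, hcu, hau⟩ := hk
    refine ⟨(∑ i, a i * u i)⁻¹ • u, V.smul_mem _ hu, ?_, ?_⟩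
    · rw [dotSmul, inv_mul_cancel₀ hau]
    · rw [dotSmul, hcu, mul_zero]
  · push_neg at hk
    exfalso
    apply h
    by_cases hc : ∃ v1 ∈ V, (∑ i, c i * v1 i) ≠ 0
    · obtain ⟨v1, hv1, hcv1⟩ := hc
      refine ⟨(∑ i, a i * v1 i) * (∑ i, c i * v1 i)⁻¹, fun v hv => ?_⟩
      have hmem : v - ((∑ i, c i * v i) * (∑ i, c i * v1 i)⁻¹) • v1 ∈ V :=
        V.sub_mem hv (V.smul_mem _ hv1)
      have h0 : ∑ i, c i * (v - ((∑ i, c i * v i) * (∑ i, c i * v1 i)⁻¹) • v1) i = 0 := by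
        rw [dotSub, dotSmul, mul_assoc, inv_mul_cancel₀ hcv1, mul_one, sub_self]
      have h1 := hk _ hmem h0
      rw [dotSub, dotSmul, sub_eq_zero] at h1
      rw [h1]
      ring
    · push_neg at hc
      refine ⟨0, fun v hv => ?_⟩
      rw [hk v hv (hc v hv), zero_mul]

end Aux

lemma sum_comm3 {ι κ σ M : Type*} [AddCommMonoid M] (s : Finset ι) (t : Finset κ)
    (r : Finset σ) (f : ι → κ → σ → M) :
    ∑ v ∈ s, ∑ u ∈ t, ∑ u' ∈ r, f v u u' = ∑ u ∈ t, ∑ u' ∈ r, ∑ v ∈ s, f v u u' := by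
  rw [Finset.sum_comm]
  exact Finset.sum_congr rfl fun u _ => Finset.sum_comm

lemma incNN_swap {m k : ℕ} {F : Type*} [Field F] [Fintype F] [DecidableEq F]
    {J : Type*} [Fintype J] (B : J → Fin k → (Fin m → F)) (a c : Fin m → F) (α β : F) :
    incNN B a c α β = incNN B c a β α := by
  rw [incNN, incNN]
  congr 1
  ext ju
  simp only [Finset.mem_filter]
  tauto

lemma key_count {m k b : ℕ} {F : Type*} [Field F] [Fintype F] [DecidableEq F]
    (B : Fin b → Fin k → (Fin m → F)) (V : Submodule F (Fin m → F))
    [DecidablePred (· ∈ V)] (a c w : Fin m → F) (hw : w ∈ V)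
    (hwa : (∑ i, a i * w i) = 1) (hwc : (∑ i, c i * w i) = 0) (α β : F) :
    k * incNN (expandPlan B V) a c α β =
      ∑ jv : Fin b × V, incBlk (expandPlan B V) a α jv * incBlk (expandPlan B V) c β jv := by
  have hshift : ∀ s t : F,
      (∑ v : V, if (∑ i, a i * (v : Fin m → F) i) = s ∧ (∑ i, c i * (v : Fin m → F) i) = t
        then (1:ℕ) else 0)
      = ∑ v : V, if (∑ i, a i * (v : Fin m → F) i) = 0 ∧ (∑ i, c i * (v : Fin m → F) i) = t
        then (1:ℕ) else 0 := by
    intro s t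
    rw [← Equiv.sum_comp (Equiv.addRight (s • (⟨w, hw⟩ : V)))
      (fun v : V => if (∑ i, a i * (v : Fin m → F) i) = s ∧ (∑ i, c i * (v : Fin m → F) i) = t
        then (1:ℕ) else 0)]
    refine Finset.sum_congr rfl fun v _ => ?_
    simp only [Equiv.coe_addRight, Submodule.coe_add, Submodule.coe_smul, dotAdd, dotSmul,
      hwa, hwc, mul_one, mul_zero, add_zero, add_eq_right]
  have hb : ∀ (e : Fin m → F) (γ : F) (j : Fin b) (v : V),
      incBlk (expandPlan B V) e γ (j, v)
        = ∑ u : Fin k, if (∑ i, e i * (v : Fin m → F) i) = γ - ∑ i, e i * B j u i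
          then (1:ℕ) else 0 := by
    intro e γ j v
    rw [incBlk, Finset.card_filter]
    refine Finset.sum_congr rfl fun u _ => ?_
    simp only [expandPlan, dotAdd, ← eq_sub_iff_add_eq]
  have hN : incNN (expandPlan B V) a c α β
      = ∑ j : Fin b, ∑ v : V, ∑ u : Fin k,
          if ((∑ i, a i * (v : Fin m → F) i) = α - ∑ i, a i * B j u i
            ∧ (∑ i, c i * (v : Fin m → F) i) = β - ∑ i, c i * B j u i) then (1:ℕ) else 0 := by
    rw [incNN, Finset.card_filter, Fintype.sum_prod_type, Fintype.sum_prod_type]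
    refine Finset.sum_congr rfl fun j _ => Finset.sum_congr rfl fun v _ =>
      Finset.sum_congr rfl fun u _ => ?_
    simp only [expandPlan, dotAdd, ← eq_sub_iff_add_eq]
  rw [hN, Fintype.sum_prod_type, Finset.mul_sum]
  refine Finset.sum_congr rfl fun j _ => ?_
  simp only [hb, Finset.sum_mul_sum, ite_zero_mul_ite_zero, mul_one]
  rw [Finset.sum_comm, sum_comm3]
  simp only [hshift]
  rw [Finset.sum_const, Finset.card_univ, Fintype.card_fin, smul_eq_mul]

/-- If the nonzero effects `E_a` and `E_c` lie in different effect classes relative to `V`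
(i.e. `span{a} + V^⊥ ≠ span{c} + V^⊥`), then they are orthogonal through the block factor
in the expansion `V(B)`: `k·Ñ^{ac} = L̃^a·(L̃^c)ᵀ`. -/
theorem otb_expandPlan_of_ne_classes {m k b : ℕ} {F : Type*} [Field F] [Fintype F]
    [DecidableEq F] (B : Fin b → Fin k → (Fin m → F)) (V : Submodule F (Fin m → F))
    [DecidablePred (· ∈ V)] (a c : Fin m → F) (ha : a ≠ 0) (hc : c ≠ 0)
    (hac : Submodule.span F {a} ⊔ dotPerp V ≠ Submodule.span F {c} ⊔ dotPerp V) :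
    k • incNN (expandPlan B V) a c =
      incBlk (expandPlan B V) a * (incBlk (expandPlan B V) c)ᵀ := by
  have hcase : (¬ ∃ l : F, ∀ v ∈ V, ∑ i, a i * v i = l * ∑ i, c i * v i)
      ∨ (¬ ∃ l : F, ∀ v ∈ V, ∑ i, c i * v i = l * ∑ i, a i * v i) := by
    by_contra hcon
    push_neg at hcon
    obtain ⟨h1, h2⟩ := hcon
    exact hac (le_antisymm
      (sup_le ((Submodule.span_singleton_le_iff_mem _ _).mpr
        ((mem_span_sup_dotPerp_iff V a c).mpr h1)) le_sup_right)
      (sup_le ((Submodule.span_singleton_le_iff_mem _ _).mpr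
        ((mem_span_sup_dotPerp_iff V c a).mpr h2)) le_sup_right))
  ext α β
  simp only [Matrix.smul_apply, Matrix.mul_apply, Matrix.transpose_apply, smul_eq_mul]
  obtain h | h := hcase
  · exact_mod_cast (exists_unit_w V a c h).elim fun w hw =>
      key_count B V a c w hw.1 hw.2.1 hw.2.2 α β
  · obtain ⟨w, hw, hwc, hwa⟩ := exists_unit_w V c a h
    calc k * incNN (expandPlan B V) a c α β
        = k * incNN (expandPlan B V) c a β α := by rw [incNN_swap]
      _ = ∑ jv : Fin b × V, incBlk (expandPlan B V) c β jv * incBlk (expandPlan B V) a α jv :=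
          key_count B V c a w hw hwc hwa β α
      _ = ∑ jv : Fin b × V, incBlk (expandPlan B V) a α jv * incBlk (expandPlan B V) c β jv :=
          Finset.sum_congr rfl fun _ _ => mul_comm _ _
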